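/- arXiv:2511.21008 — 2 statements merged into one kernel-verified Lean document; each statement's English description precedes it below -/
import Mathlib

section
/- Let μ and μ* be two Ising models on {-1,1}ⁿ with symmetric zero-diagonal interaction matrices J and J* and zero external fields, i.e. μ(x) ∝ exp((1/2)xᵀJx). Then the total variation distance satisfies TV(μ, μ*) ≤ n·‖J - J*‖_F. -/
open Matrix

/-- Spin vector associated to a Boolean configuration: entries are ±1. -/
def pmVec {n : ℕ} (σ : Fin n → Bool) : Fin n → ℝ := fun i => if σ i then 1 else -1

/-- Unnormalized Ising weight (zero external field). -/
noncomputable def isingWeight {n : ℕ} (J : Matrix (Fin n) (Fin n) ℝ)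
    (σ : Fin n → Bool) : ℝ :=
  Real.exp ((1 / 2) * (pmVec σ ⬝ᵥ J.mulVec (pmVec σ)))

/-- Ising probability mass (zero external field): `μ(x) ∝ exp((1/2) xᵀJx)`. -/
noncomputable def isingProb {n : ℕ} (J : Matrix (Fin n) (Fin n) ℝ)
    (σ : Fin n → Bool) : ℝ :=
  isingWeight J σ / (∑ τ : Fin n → Bool, isingWeight J τ)

lemma exp_le_one_add_two_mul {t : ℝ} (h0 : 0 ≤ t) (h1 : t ≤ 1) :
    Real.exp t ≤ 1 + 2 * t := by
  have h := convexOn_exp.2 (Set.mem_univ (0:ℝ)) (Set.mem_univ (1:ℝ))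
    (by linarith : (0:ℝ) ≤ 1 - t) h0 (by ring)
  simp only [smul_eq_mul, mul_zero, mul_one, zero_add, Real.exp_zero] at h
  have he : Real.exp 1 < 2.7182818286 := Real.exp_one_lt_d9
  nlinarith [h, he]

/-- The total variation distance between two zero-field Ising models is at most
`n` times the Frobenius distance between their interaction matrices. -/
theorem tv_le_n_frobenius {n : ℕ} (J J' : Matrix (Fin n) (Fin n) ℝ)
    (hs : J.IsSymm) (hs' : J'.IsSymm)
    (hd : ∀ i, J i i = 0) (hd' : ∀ i, J' i i = 0) :
    (1 / 2) * ∑ σ : Fin n → Bool, |isingProb J σ - isingProb J' σ| ≤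
      (n : ℝ) * Real.sqrt (∑ i, ∑ j, (J i j - J' i j) ^ 2) := by
  set S : ℝ := ∑ i, ∑ j, (J i j - J' i j) ^ 2 with hS
  have hS0 : 0 ≤ S := Finset.sum_nonneg fun i _ =>
    Finset.sum_nonneg fun j _ => sq_nonneg _
  set t : ℝ := (n : ℝ) * Real.sqrt S with htdef
  have ht0 : 0 ≤ t := mul_nonneg (Nat.cast_nonneg n) (Real.sqrt_nonneg _)
  -- Cauchy–Schwarz: sum of absolute values bounded by t
  have hCS : ∑ i, ∑ j, |J i j - J' i j| ≤ t := by
    have ha0 : 0 ≤ ∑ i, ∑ j, |J i j - J' i j| :=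
      Finset.sum_nonneg fun i _ => Finset.sum_nonneg fun j _ => abs_nonneg _
    have key := Finset.sum_mul_sq_le_sq_mul_sq (Finset.univ : Finset (Fin n × Fin n))
      (fun _ => (1:ℝ)) (fun p => |J p.1 p.2 - J' p.1 p.2|)
    simp only [one_mul, one_pow, sq_abs] at key
    have e1 : ∑ p : Fin n × Fin n, |J p.1 p.2 - J' p.1 p.2|
        = ∑ i, ∑ j, |J i j - J' i j| := Fintype.sum_prod_type _
    have e2 : ∑ p : Fin n × Fin n, (J p.1 p.2 - J' p.1 p.2) ^ 2 = S := by
      rw [hS]; exact Fintype.sum_prod_type _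
    have e3 : ∑ _p : Fin n × Fin n, (1:ℝ) = (n:ℝ) ^ 2 := by
      simp [Finset.card_univ]; push_cast; ring
    rw [e1, e2, e3] at key
    have hsq : (∑ i, ∑ j, |J i j - J' i j|) ^ 2 ≤ t ^ 2 := by
      rw [htdef, mul_pow, Real.sq_sqrt hS0]; exact key
    calc ∑ i, ∑ j, |J i j - J' i j|
        = Real.sqrt ((∑ i, ∑ j, |J i j - J' i j|) ^ 2) := (Real.sqrt_sq ha0).symm
      _ ≤ Real.sqrt (t ^ 2) := Real.sqrt_le_sqrt hsq
      _ = t := Real.sqrt_sq ht0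
  -- quadratic form difference bound
  have hA : ∀ σ : Fin n → Bool,
      |pmVec σ ⬝ᵥ J.mulVec (pmVec σ) - pmVec σ ⬝ᵥ J'.mulVec (pmVec σ)| ≤ t := by
    intro σ
    have hpm : ∀ i, |pmVec σ i| = 1 := by
      intro i; unfold pmVec; split <;> norm_num
    refine le_trans ?_ hCS
    simp only [dotProduct, mulVec, dotProduct]
    rw [← Finset.sum_sub_distrib]
    refine le_trans (Finset.abs_sum_le_sum_abs _ _) (Finset.sum_le_sum fun i _ => ?_)
    rw [← mul_sub, ← Finset.sum_sub_distrib, abs_mul, hpm, one_mul]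
    refine le_trans (Finset.abs_sum_le_sum_abs _ _) (Finset.sum_le_sum fun j _ => ?_)
    rw [← sub_mul, abs_mul, hpm, mul_one]
  -- weight comparison
  have hW : ∀ σ : Fin n → Bool,
      isingWeight J σ ≤ Real.exp (t / 2) * isingWeight J' σ := by
    intro σ
    unfold isingWeight
    rw [← Real.exp_add]
    apply Real.exp_le_exp.mpr
    have := abs_le.mp (hA σ)
    linarith [this.2]
  have hW' : ∀ σ : Fin n → Bool,
      isingWeight J' σ ≤ Real.exp (t / 2) * isingWeight J σ := by
    intro σ
    unfold isingWeight
    rw [← Real.exp_add]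
    apply Real.exp_le_exp.mpr
    have := abs_le.mp (hA σ)
    linarith [this.1]
  set Z : ℝ := ∑ τ : Fin n → Bool, isingWeight J τ with hZdef
  set Z' : ℝ := ∑ τ : Fin n → Bool, isingWeight J' τ with hZ'def
  have hZpos : 0 < Z := Finset.sum_pos (fun σ _ => Real.exp_pos _) Finset.univ_nonempty
  have hZ'pos : 0 < Z' := Finset.sum_pos (fun σ _ => Real.exp_pos _) Finset.univ_nonempty
  have hZle : Z ≤ Real.exp (t / 2) * Z' := by
    rw [hZdef, hZ'def, Finset.mul_sum]
    exact Finset.sum_le_sum fun σ _ => hW σ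
  have hZ'le : Z' ≤ Real.exp (t / 2) * Z := by
    rw [hZdef, hZ'def, Finset.mul_sum]
    exact Finset.sum_le_sum fun σ _ => hW' σ
  set E : ℝ := Real.exp t with hEdef
  have hE1 : 1 ≤ E := Real.one_le_exp ht0
  have hEE : Real.exp (t/2) * Real.exp (t/2) = E := by
    rw [← Real.exp_add]; ring_nf; exact hEdef.symm
  -- probability ratio bounds
  have hpq : ∀ σ : Fin n → Bool, isingProb J σ ≤ E * isingProb J' σ := by
    intro σ
    unfold isingProb
    rw [← hZdef, ← hZ'def]
    have hden : Real.exp (-(t/2)) * Z' ≤ Z := by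
      rw [Real.exp_neg]
      rw [inv_mul_le_iff₀ (Real.exp_pos _)]
      linarith [hZ'le]
    have h1 : isingWeight J σ / Z ≤
        (Real.exp (t/2) * isingWeight J' σ) / (Real.exp (-(t/2)) * Z') := by
      exact div_le_div₀ (le_of_lt (mul_pos (Real.exp_pos _) (Real.exp_pos _)))
        (hW σ) (mul_pos (Real.exp_pos _) hZ'pos) hden
    refine h1.trans_eq ?_
    have hq : Real.exp (t/2) / Real.exp (-(t/2)) = E := by
      rw [← Real.exp_sub, hEdef]; ring_nf
    rw [← div_mul_div_comm, hq]
  have hqp : ∀ σ : Fin n → Bool, isingProb J' σ ≤ E * isingProb J σ := by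
    intro σ
    unfold isingProb
    rw [← hZdef, ← hZ'def]
    have hden : Real.exp (-(t/2)) * Z ≤ Z' := by
      rw [Real.exp_neg]
      rw [inv_mul_le_iff₀ (Real.exp_pos _)]
      linarith [hZle]
    have h1 : isingWeight J' σ / Z' ≤
        (Real.exp (t/2) * isingWeight J σ) / (Real.exp (-(t/2)) * Z) := by
      exact div_le_div₀ (le_of_lt (mul_pos (Real.exp_pos _) (Real.exp_pos _)))
        (hW' σ) (mul_pos (Real.exp_pos _) hZpos) hden
    refine h1.trans_eq ?_
    have hq : Real.exp (t/2) / Real.exp (-(t/2)) = E := by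
      rw [← Real.exp_sub, hEdef]; ring_nf
    rw [← div_mul_div_comm, hq]
  have hp0 : ∀ σ : Fin n → Bool, 0 ≤ isingProb J σ := fun σ =>
    div_nonneg (Real.exp_pos _).le hZpos.le
  have hq0 : ∀ σ : Fin n → Bool, 0 ≤ isingProb J' σ := fun σ =>
    div_nonneg (Real.exp_pos _).le hZ'pos.le
  have hsum' : ∑ σ : Fin n → Bool, isingProb J' σ = 1 := by
    unfold isingProb
    rw [← Finset.sum_div]
    exact div_self (ne_of_gt hZ'pos)
  have hsum : ∑ σ : Fin n → Bool, isingProb J σ = 1 := by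
    unfold isingProb
    rw [← Finset.sum_div]
    exact div_self (ne_of_gt hZpos)
  -- pointwise bound
  have hpt : ∀ σ : Fin n → Bool,
      |isingProb J σ - isingProb J' σ| ≤ (E - 1) * isingProb J' σ := by
    intro σ
    have h1 := hpq σ
    have h2 := hqp σ
    have h3 := hp0 σ
    have h4 := hq0 σ
    rw [abs_sub_le_iff]
    constructor
    · nlinarith
    · nlinarith [sq_nonneg (E - 1), mul_nonneg h3 (sq_nonneg (E - 1))]
  have hTV : ∑ σ : Fin n → Bool, |isingProb J σ - isingProb J' σ| ≤ E - 1 := by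
    calc ∑ σ : Fin n → Bool, |isingProb J σ - isingProb J' σ|
        ≤ ∑ σ : Fin n → Bool, (E - 1) * isingProb J' σ :=
          Finset.sum_le_sum fun σ _ => hpt σ
      _ = (E - 1) * 1 := by rw [← Finset.mul_sum, hsum']
      _ = E - 1 := by ring
  by_cases hcase : t ≤ 1
  · have hexp : E ≤ 1 + 2 * t := exp_le_one_add_two_mul ht0 hcase
    calc (1/2 : ℝ) * ∑ σ : Fin n → Bool, |isingProb J σ - isingProb J' σ|
        ≤ (1/2) * (E - 1) := by linarith [hTV]
      _ ≤ t := by linarith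
  · push_neg at hcase
    have hbound : ∑ σ : Fin n → Bool, |isingProb J σ - isingProb J' σ| ≤ 2 := by
      calc ∑ σ : Fin n → Bool, |isingProb J σ - isingProb J' σ|
          ≤ ∑ σ : Fin n → Bool, (isingProb J σ + isingProb J' σ) := by
            refine Finset.sum_le_sum fun σ _ => ?_
            have := abs_sub_abs_le_abs_sub (isingProb J σ) (isingProb J' σ)
            rw [abs_sub_le_iff]
            constructor <;> nlinarith [hp0 σ, hq0 σ]
        _ = 2 := by rw [Finset.sum_add_distrib, hsum, hsum']; norm_num
    linarith
end

section
/- Suppose J₁, J₂ are symmetric n×n zero-diagonal matrices such that for every t ∈ [0,1], the Ising model P_{J_t} with J_t = tJ₁ + (1-t)J₂ satisfies the Poincaré inequality Var(f) ≤ 2ρ·∑_j E[Var(f | X_{-j})]. Then TV(P_{J₁}, P_{J₂}) ≤ ρ·‖J₁ - J₂‖_F. -/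
open Matrix

/-- Expectation under the Ising model with interaction matrix `J`. -/
noncomputable def isingExp {n : ℕ} (J : Matrix (Fin n) (Fin n) ℝ)
    (f : (Fin n → Bool) → ℝ) : ℝ :=
  ∑ σ : Fin n → Bool, isingProb J σ * f σ

/-- Variance under the Ising model with interaction matrix `J`. -/
noncomputable def isingVar {n : ℕ} (J : Matrix (Fin n) (Fin n) ℝ)
    (f : (Fin n → Bool) → ℝ) : ℝ :=
  isingExp J (fun σ => (f σ) ^ 2) - (isingExp J f) ^ 2

/-- Conditional expectation of `f` given all coordinates except `j`, under the
Ising model with interaction matrix `J`. -/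
noncomputable def isingCondExp {n : ℕ} (J : Matrix (Fin n) (Fin n) ℝ)
    (f : (Fin n → Bool) → ℝ) (j : Fin n) (σ : Fin n → Bool) : ℝ :=
  (∑ b : Bool, isingProb J (Function.update σ j b) * f (Function.update σ j b)) /
    (∑ b : Bool, isingProb J (Function.update σ j b))

/-- Conditional variance `Var(f | X₋ⱼ)` under the Ising model with matrix `J`. -/
noncomputable def isingCondVar {n : ℕ} (J : Matrix (Fin n) (Fin n) ℝ)
    (f : (Fin n → Bool) → ℝ) (j : Fin n) (σ : Fin n → Bool) : ℝ :=
  isingCondExp J (fun τ => (f τ) ^ 2) j σ - (isingCondExp J f j σ) ^ 2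

section Helpers
variable {n : ℕ}

lemma isingWeight_pos (J : Matrix (Fin n) (Fin n) ℝ) (σ : Fin n → Bool) :
    0 < isingWeight J σ := Real.exp_pos _

lemma isingZ_pos (J : Matrix (Fin n) (Fin n) ℝ) :
    0 < ∑ τ : Fin n → Bool, isingWeight J τ :=
  Finset.sum_pos (fun τ _ => isingWeight_pos J τ) Finset.univ_nonempty

lemma isingProb_pos (J : Matrix (Fin n) (Fin n) ℝ) (σ : Fin n → Bool) :
    0 < isingProb J σ := div_pos (isingWeight_pos J σ) (isingZ_pos J)

lemma sum_isingProb (J : Matrix (Fin n) (Fin n) ℝ) :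
    ∑ σ : Fin n → Bool, isingProb J σ = 1 := by
  simp only [isingProb]
  rw [← Finset.sum_div, div_self (isingZ_pos J).ne']

lemma isingExp_const (J : Matrix (Fin n) (Fin n) ℝ) (c : ℝ) :
    isingExp J (fun _ => c) = c := by
  rw [isingExp, ← Finset.sum_mul, sum_isingProb, one_mul]

lemma isingExp_mono (J : Matrix (Fin n) (Fin n) ℝ) {f g : (Fin n → Bool) → ℝ}
    (h : ∀ σ, f σ ≤ g σ) : isingExp J f ≤ isingExp J g :=
  Finset.sum_le_sum fun σ _ =>
    mul_le_mul_of_nonneg_left (h σ) (isingProb_pos J σ).le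

lemma dot_mulVec_symm {A : Matrix (Fin n) (Fin n) ℝ} (hA : A.IsSymm) (x y : Fin n → ℝ) :
    x ⬝ᵥ A.mulVec y = y ⬝ᵥ A.mulVec x := by
  simp only [dotProduct, mulVec, Finset.mul_sum]
  rw [Finset.sum_comm]
  refine Finset.sum_congr rfl fun i _ => Finset.sum_congr rfl fun k _ => ?_
  rw [hA.apply k i]
  ring

lemma isingCondVar_eq (J : Matrix (Fin n) (Fin n) ℝ) (f : (Fin n → Bool) → ℝ)
    (j : Fin n) (σ : Fin n → Bool) :
    isingCondVar J f j σ =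
      isingProb J (Function.update σ j true) * isingProb J (Function.update σ j false)
        * (f (Function.update σ j true) - f (Function.update σ j false)) ^ 2
        / (isingProb J (Function.update σ j true) + isingProb J (Function.update σ j false)) ^ 2 := by
  have hA := isingProb_pos J (Function.update σ j true)
  have hB := isingProb_pos J (Function.update σ j false)
  have hs : isingProb J (Function.update σ j true) + isingProb J (Function.update σ j false) ≠ 0 := by
    positivity
  simp only [isingCondVar, isingCondExp, Fintype.sum_bool]
  field_simp
  ring

lemma isingCondVar_nonneg (J : Matrix (Fin n) (Fin n) ℝ) (f : (Fin n → Bool) → ℝ)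
    (j : Fin n) (σ : Fin n → Bool) : 0 ≤ isingCondVar J f j σ := by
  rw [isingCondVar_eq]
  have hA := isingProb_pos J (Function.update σ j true)
  have hB := isingProb_pos J (Function.update σ j false)
  positivity

lemma isingCondVar_le (J : Matrix (Fin n) (Fin n) ℝ) (f : (Fin n → Bool) → ℝ)
    (j : Fin n) (σ : Fin n → Bool) :
    isingCondVar J f j σ ≤
      (1 / 4) * (f (Function.update σ j true) - f (Function.update σ j false)) ^ 2 := by
  rw [isingCondVar_eq]
  have hA := isingProb_pos J (Function.update σ j true)
  have hB := isingProb_pos J (Function.update σ j false)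
  set A := isingProb J (Function.update σ j true)
  set B := isingProb J (Function.update σ j false)
  set d := f (Function.update σ j true) - f (Function.update σ j false)
  rw [div_le_iff₀ (by positivity)]
  nlinarith [mul_nonneg (sq_nonneg (A - B)) (sq_nonneg d)]

end Helpers

section Helpers2
variable {n : ℕ}

lemma pmVec_update (σ : Fin n → Bool) (j : Fin n) (b : Bool) :
    pmVec (Function.update σ j b) = Function.update (pmVec σ) j (if b then 1 else -1) := by
  funext k
  by_cases h : k = j <;> simp [pmVec, Function.update_apply, h]

lemma pmVec_flip (σ : Fin n → Bool) : pmVec (fun i => !σ i) = -pmVec σ := by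
  funext i
  cases h : σ i <;> simp [pmVec, h]

lemma isingProb_flip (J : Matrix (Fin n) (Fin n) ℝ) (σ : Fin n → Bool) :
    isingProb J (fun i => !σ i) = isingProb J σ := by
  simp [isingProb, isingWeight, pmVec_flip, mulVec_neg, neg_dotProduct, dotProduct_neg]

lemma isingExp_odd (J : Matrix (Fin n) (Fin n) ℝ) (f : (Fin n → Bool) → ℝ)
    (hf : ∀ σ, f (fun i => !σ i) = - f σ) : isingExp J f = 0 := by
  have hinv : Function.Involutive (fun σ : Fin n → Bool => fun i => !σ i) := by
    intro σ; funext i; simp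
  have h : isingExp J f = - isingExp J f := by
    nth_rewrite 1 [isingExp]
    rw [← Equiv.sum_comp hinv.toPerm (fun σ => isingProb J σ * f σ)]
    simp only [Function.Involutive.coe_toPerm]
    rw [isingExp, ← Finset.sum_neg_distrib]
    refine Finset.sum_congr rfl fun σ _ => ?_
    rw [isingProb_flip, hf]
    ring
  linarith

lemma quad_update_diff {E : Matrix (Fin n) (Fin n) ℝ} (hE : E.IsSymm) (hEd : ∀ i, E i i = 0)
    (σ : Fin n → Bool) (j : Fin n) :
    pmVec (Function.update σ j true) ⬝ᵥ E.mulVec (pmVec (Function.update σ j true))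
      - pmVec (Function.update σ j false) ⬝ᵥ E.mulVec (pmVec (Function.update σ j false))
      = 4 * (E.mulVec (pmVec σ)) j := by
  set x := pmVec σ with hx
  set u := pmVec (Function.update σ j true) with hudef
  set v := pmVec (Function.update σ j false) with hvdef
  have hu : u = Function.update x j 1 := by rw [hudef, pmVec_update]; simp [hx]
  have hv : v = Function.update x j (-1) := by rw [hvdef, pmVec_update]; simp [hx]
  have huv : u - v = Pi.single j 2 := by
    funext k
    by_cases h : k = j <;>
      simp [hu, hv, Function.update_apply, Pi.single_apply, h] <;> norm_num
  have hsum : u + v = (2 : ℝ) • x - Pi.single j (2 * x j) := by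
    funext k
    by_cases h : k = j <;>
      simp [hu, hv, Function.update_apply, Pi.single_apply, h, two_mul]
  have key : u ⬝ᵥ E.mulVec u - v ⬝ᵥ E.mulVec v = (u - v) ⬝ᵥ E.mulVec (u + v) := by
    rw [mulVec_add, dotProduct_add, sub_dotProduct, sub_dotProduct,
      dot_mulVec_symm hE v u]
    ring
  rw [key, huv, single_dotProduct, hsum, mulVec_sub, Matrix.mulVec_smul, mulVec_single]
  simp [hEd j]
  ring

lemma lin_update_diff (E : Matrix (Fin n) (Fin n) ℝ) (σ : Fin n → Bool) (i j : Fin n) :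
    (E.mulVec (pmVec (Function.update σ i true))) j
      - (E.mulVec (pmVec (Function.update σ i false))) j = 2 * E j i := by
  simp only [mulVec, dotProduct, pmVec_update, ← Finset.sum_sub_distrib]
  rw [Finset.sum_eq_single i]
  · simp [Function.update_apply]; ring
  · intro k _ hk
    simp [Function.update_apply, hk]
  · intro h; exact absurd (Finset.mem_univ i) h

lemma condVar_quad_le {E : Matrix (Fin n) (Fin n) ℝ} (hE : E.IsSymm) (hEd : ∀ i, E i i = 0)
    (J : Matrix (Fin n) (Fin n) ℝ) (σ : Fin n → Bool) (j : Fin n) :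
    isingCondVar J (fun τ => (1 / 2) * (pmVec τ ⬝ᵥ E.mulVec (pmVec τ))) j σ
      ≤ ((E.mulVec (pmVec σ)) j) ^ 2 := by
  refine (isingCondVar_le J _ j σ).trans ?_
  have h := quad_update_diff hE hEd σ j
  have h2 : (1 / 2) * (pmVec (Function.update σ j true) ⬝ᵥ E.mulVec (pmVec (Function.update σ j true)))
      - (1 / 2) * (pmVec (Function.update σ j false) ⬝ᵥ E.mulVec (pmVec (Function.update σ j false)))
      = 2 * (E.mulVec (pmVec σ)) j := by linarith
  rw [h2]
  ring_nf
  exact le_refl _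

lemma condVar_lin_le (E : Matrix (Fin n) (Fin n) ℝ)
    (J : Matrix (Fin n) (Fin n) ℝ) (σ : Fin n → Bool) (i j : Fin n) :
    isingCondVar J (fun τ => (E.mulVec (pmVec τ)) j) i σ ≤ (E j i) ^ 2 := by
  refine (isingCondVar_le J _ i σ).trans ?_
  rw [lin_update_diff]
  ring_nf
  exact le_refl _

end Helpers2

section Calculus
variable {n : ℕ}

noncomputable def qform (J : Matrix (Fin n) (Fin n) ℝ) (σ : Fin n → Bool) : ℝ :=
  (1 / 2) * (pmVec σ ⬝ᵥ J.mulVec (pmVec σ))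

lemma isingWeight_eq (J : Matrix (Fin n) (Fin n) ℝ) (σ : Fin n → Bool) :
    isingWeight J σ = Real.exp (qform J σ) := rfl

lemma qform_seg (J₁ J₂ : Matrix (Fin n) (Fin n) ℝ) (t : ℝ) (σ : Fin n → Bool) :
    qform (t • J₁ + (1 - t) • J₂) σ = qform J₂ σ + t * qform (J₁ - J₂) σ := by
  simp only [qform, add_mulVec, smul_mulVec, dotProduct_add, dotProduct_smul,
    sub_mulVec, dotProduct_sub, smul_eq_mul]
  ring

noncomputable def segProb (J₁ J₂ : Matrix (Fin n) (Fin n) ℝ) (t : ℝ) (σ : Fin n → Bool) : ℝ :=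
  isingProb (t • J₁ + (1 - t) • J₂) σ

lemma segProb_eq (J₁ J₂ : Matrix (Fin n) (Fin n) ℝ) (t : ℝ) (σ : Fin n → Bool) :
    segProb J₁ J₂ t σ =
      Real.exp (qform J₂ σ + t * qform (J₁ - J₂) σ)
        / ∑ τ : Fin n → Bool, Real.exp (qform J₂ τ + t * qform (J₁ - J₂) τ) := by
  simp only [segProb, isingProb, isingWeight_eq, qform_seg]

lemma segProb_hasDerivAt (J₁ J₂ : Matrix (Fin n) (Fin n) ℝ) (σ : Fin n → Bool) (t : ℝ) :
    HasDerivAt (fun s => segProb J₁ J₂ s σ)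
      (segProb J₁ J₂ t σ * (qform (J₁ - J₂) σ
        - ∑ τ : Fin n → Bool, segProb J₁ J₂ t τ * qform (J₁ - J₂) τ)) t := by
  have hfun : ∀ τ : Fin n → Bool, HasDerivAt
      (fun s : ℝ => Real.exp (qform J₂ τ + s * qform (J₁ - J₂) τ))
      (Real.exp (qform J₂ τ + t * qform (J₁ - J₂) τ) * qform (J₁ - J₂) τ) t := by
    intro τ
    have h1 : HasDerivAt (fun s : ℝ => qform J₂ τ + s * qform (J₁ - J₂) τ)
        (qform (J₁ - J₂) τ) t := by
      simpa using ((hasDerivAt_id t).mul_const (qform (J₁ - J₂) τ)).const_add (qform J₂ τ)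
    exact h1.exp
  have hZpos : (0:ℝ) < ∑ τ : Fin n → Bool, Real.exp (qform J₂ τ + t * qform (J₁ - J₂) τ) :=
    Finset.sum_pos (fun τ _ => Real.exp_pos _) Finset.univ_nonempty
  have hZ : HasDerivAt
      (fun s => ∑ τ : Fin n → Bool, Real.exp (qform J₂ τ + s * qform (J₁ - J₂) τ))
      (∑ τ : Fin n → Bool, Real.exp (qform J₂ τ + t * qform (J₁ - J₂) τ) * qform (J₁ - J₂) τ) t :=
    HasDerivAt.fun_sum fun τ _ => hfun τ
  have hdiv := (hfun σ).fun_div hZ hZpos.ne'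
  have heq : (fun s => segProb J₁ J₂ s σ) = fun s =>
      Real.exp (qform J₂ σ + s * qform (J₁ - J₂) σ)
        / ∑ τ : Fin n → Bool, Real.exp (qform J₂ τ + s * qform (J₁ - J₂) τ) :=
    funext fun s => segProb_eq J₁ J₂ s σ
  rw [heq]
  refine hdiv.congr_deriv ?_
  simp only [segProb_eq, div_mul_eq_mul_div, ← Finset.sum_div]
  field_simp

lemma segProb_continuous (J₁ J₂ : Matrix (Fin n) (Fin n) ℝ) (σ : Fin n → Bool) :
    Continuous fun t : ℝ => segProb J₁ J₂ t σ := by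
  have heq : (fun t => segProb J₁ J₂ t σ) = fun t =>
      Real.exp (qform J₂ σ + t * qform (J₁ - J₂) σ)
        / ∑ τ : Fin n → Bool, Real.exp (qform J₂ τ + t * qform (J₁ - J₂) τ) :=
    funext fun t => segProb_eq J₁ J₂ t σ
  rw [heq]
  have hc : ∀ τ : Fin n → Bool,
      Continuous fun t : ℝ => Real.exp (qform J₂ τ + t * qform (J₁ - J₂) τ) := by
    intro τ
    exact Real.continuous_exp.comp (continuous_const.add (continuous_id.mul continuous_const))
  refine (hc σ).div (continuous_finset_sum _ fun τ _ => hc τ) fun t => ?_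
  exact (Finset.sum_pos (fun τ _ => Real.exp_pos _) Finset.univ_nonempty).ne'

end Calculus


/-- If every Ising model on the segment between `J₁` and `J₂` satisfies the Poincaré
inequality with constant `2ρ`, then `TV(P_{J₁}, P_{J₂}) ≤ ρ ‖J₁ - J₂‖_F`. -/
theorem tv_le_rho_frobenius_of_poincare {n : ℕ} (J₁ J₂ : Matrix (Fin n) (Fin n) ℝ)
    (h₁ : J₁.IsSymm) (h₂ : J₂.IsSymm)
    (hd₁ : ∀ i, J₁ i i = 0) (hd₂ : ∀ i, J₂ i i = 0) (ρ : ℝ)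
    (hpoincare : ∀ t ∈ Set.Icc (0 : ℝ) 1, ∀ f : (Fin n → Bool) → ℝ,
      isingVar (t • J₁ + (1 - t) • J₂) f ≤
        2 * ρ * ∑ j, isingExp (t • J₁ + (1 - t) • J₂)
          (fun σ => isingCondVar (t • J₁ + (1 - t) • J₂) f j σ)) :
    (1 / 2) * ∑ σ : Fin n → Bool, |isingProb J₁ σ - isingProb J₂ σ| ≤
      ρ * Real.sqrt (∑ i, ∑ j, (J₁ i j - J₂ i j) ^ 2) := by
  rcases Nat.eq_zero_or_pos n with hn | hn
  · subst hn
    have hone : ∀ (J : Matrix (Fin 0) (Fin 0) ℝ) (σ : Fin 0 → Bool), isingProb J σ = 1 := by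
      intro J σ
      rw [isingProb, Fintype.sum_unique, Subsingleton.elim σ (default : Fin 0 → Bool)]
      exact div_self (isingWeight_pos J _).ne'
    simp [hone]
  -- main case
  set E : Matrix (Fin n) (Fin n) ℝ := J₁ - J₂ with hEdef
  have hE : E.IsSymm := h₁.sub h₂
  have hEd : ∀ i, E i i = 0 := fun i => by simp [hEdef, hd₁ i, hd₂ i]
  have hFE : ∑ i, ∑ j, (J₁ i j - J₂ i j) ^ 2 = ∑ j, ∑ i, (E j i) ^ 2 := by
    simp [hEdef, Matrix.sub_apply]
  set F : ℝ := ∑ i, ∑ j, (J₁ i j - J₂ i j) ^ 2 with hFdef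
  have hF0 : 0 ≤ F := Finset.sum_nonneg fun i _ => Finset.sum_nonneg fun j _ => sq_nonneg _
  -- positivity of ρ
  have hρ : 0 < ρ := by
    have h0 : (0:ℝ) ∈ Set.Icc (0:ℝ) 1 := ⟨le_refl 0, zero_le_one⟩
    set f : (Fin n → Bool) → ℝ := fun σ => pmVec σ ⟨0, hn⟩ with hfdef
    have hmean : isingExp ((0:ℝ) • J₁ + (1-(0:ℝ)) • J₂) f = 0 := by
      apply isingExp_odd
      intro σ
      have := congrFun (pmVec_flip σ) ⟨0, hn⟩
      simpa [hfdef] using this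
    have hsq : isingExp ((0:ℝ) • J₁ + (1-(0:ℝ)) • J₂) (fun σ => f σ ^ 2) = 1 := by
      have h1 : (fun σ : Fin n → Bool => f σ ^ 2) = fun _ => (1:ℝ) := by
        funext σ
        cases h : σ ⟨0, hn⟩ <;> simp [hfdef, pmVec, h]
      rw [h1, isingExp_const]
    have hp := hpoincare 0 h0 f
    rw [isingVar, hsq, hmean] at hp
    norm_num at hp
    have hS : 0 ≤ ∑ j, isingExp J₂ (fun σ => isingCondVar J₂ f j σ) :=
      Finset.sum_nonneg fun j _ => Finset.sum_nonneg fun σ _ =>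
        mul_nonneg (isingProb_pos _ σ).le (isingCondVar_nonneg _ _ _ _)
    by_contra hcon
    push_neg at hcon
    nlinarith [mul_nonneg hS (neg_nonneg.mpr hcon)]
  -- the quadratic observable
  set dlt : (Fin n → Bool) → ℝ := fun σ => qform E σ with hdlt
  -- variance bound along the segment
  have hvarbound : ∀ t ∈ Set.Icc (0:ℝ) 1,
      isingVar (t • J₁ + (1-t) • J₂) dlt ≤ 2*ρ*(2*ρ*F) := by
    intro t ht
    have hstep2 : ∀ j, isingExp (t • J₁ + (1-t) • J₂)
        (fun σ => ((E.mulVec (pmVec σ)) j) ^ 2) ≤ 2*ρ*∑ i, (E j i)^2 := by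
      intro j
      have hmean : isingExp (t • J₁ + (1-t) • J₂) (fun σ => (E.mulVec (pmVec σ)) j) = 0 := by
        apply isingExp_odd
        intro σ
        simp [pmVec_flip, mulVec_neg]
      have hvj := hpoincare t ht (fun σ => (E.mulVec (pmVec σ)) j)
      have hcond : ∀ i, isingExp (t • J₁ + (1-t) • J₂)
          (fun σ => isingCondVar (t • J₁ + (1-t) • J₂) (fun τ => (E.mulVec (pmVec τ)) j) i σ)
          ≤ (E j i)^2 := by
        intro i
        have hmono := isingExp_mono (t • J₁ + (1-t) • J₂)
          (f := fun σ => isingCondVar (t • J₁ + (1-t) • J₂) (fun τ => (E.mulVec (pmVec τ)) j) i σ)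
          (g := fun _ => (E j i)^2) (fun σ => condVar_lin_le E _ σ i j)
        rwa [isingExp_const] at hmono
      have h1 : isingVar (t • J₁ + (1-t) • J₂) (fun σ => (E.mulVec (pmVec σ)) j)
          ≤ 2*ρ*∑ i, (E j i)^2 := by
        refine hvj.trans ?_
        have hs := Finset.sum_le_sum (fun i (_ : i ∈ Finset.univ) => hcond i)
        have h2ρ : (0:ℝ) ≤ 2*ρ := by positivity
        exact mul_le_mul_of_nonneg_left hs h2ρ
      have h2 : isingExp (t • J₁ + (1-t) • J₂) (fun σ => ((E.mulVec (pmVec σ)) j) ^ 2)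
          = isingVar (t • J₁ + (1-t) • J₂) (fun σ => (E.mulVec (pmVec σ)) j)
            + (isingExp (t • J₁ + (1-t) • J₂) (fun σ => (E.mulVec (pmVec σ)) j))^2 := by
        rw [isingVar]; ring
      rw [h2, hmean]
      simpa using h1
    have hcondd : ∀ j, isingExp (t • J₁ + (1-t) • J₂)
        (fun σ => isingCondVar (t • J₁ + (1-t) • J₂) dlt j σ)
        ≤ isingExp (t • J₁ + (1-t) • J₂) (fun σ => ((E.mulVec (pmVec σ)) j) ^ 2) :=
      fun j => isingExp_mono _ fun σ => condVar_quad_le hE hEd (t • J₁ + (1-t) • J₂) σ j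
    refine (hpoincare t ht dlt).trans ?_
    have hsum : ∑ j, isingExp (t • J₁ + (1-t) • J₂)
        (fun σ => isingCondVar (t • J₁ + (1-t) • J₂) dlt j σ) ≤ 2*ρ*F := by
      calc ∑ j, isingExp (t • J₁ + (1-t) • J₂)
            (fun σ => isingCondVar (t • J₁ + (1-t) • J₂) dlt j σ)
          ≤ ∑ j, (2*ρ*∑ i, (E j i)^2) :=
            Finset.sum_le_sum fun j _ => (hcondd j).trans (hstep2 j)
        _ = 2*ρ*F := by
            rw [← Finset.mul_sum]
            simp [hEdef, Matrix.sub_apply, hFdef]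
    have h2ρ : (0:ℝ) ≤ 2*ρ := by positivity
    exact mul_le_mul_of_nonneg_left hsum h2ρ
  -- derivative function
  set D : ℝ → (Fin n → Bool) → ℝ := fun t σ => segProb J₁ J₂ t σ * (qform E σ
      - ∑ τ : Fin n → Bool, segProb J₁ J₂ t τ * qform E τ) with hDdef
  have hcontD : ∀ σ, Continuous fun t => D t σ := by
    intro σ
    exact (segProb_continuous J₁ J₂ σ).mul (continuous_const.sub
      (continuous_finset_sum _ fun τ _ => (segProb_continuous J₁ J₂ τ).mul continuous_const))
  have hK1 : (1:ℝ) • J₁ + (1-(1:ℝ)) • J₂ = J₁ := by simp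
  have hK0 : (0:ℝ) • J₁ + (1-(0:ℝ)) • J₂ = J₂ := by simp
  have hFTC : ∀ σ, isingProb J₁ σ - isingProb J₂ σ = ∫ t in (0:ℝ)..1, D t σ := by
    intro σ
    have h := intervalIntegral.integral_eq_sub_of_hasDerivAt
      (f := fun t => segProb J₁ J₂ t σ) (f' := fun t => D t σ)
      (fun t _ => segProb_hasDerivAt J₁ J₂ σ t)
      ((hcontD σ).intervalIntegrable 0 1)
    rw [h]
    unfold segProb
    norm_num
  -- the pointwise-in-t bound on the total derivative mass
  have hsumD : ∀ t ∈ Set.Icc (0:ℝ) 1, ∑ σ : Fin n → Bool, |D t σ| ≤ 2*ρ*Real.sqrt F := by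
    intro t ht
    set m : ℝ := ∑ τ : Fin n → Bool, segProb J₁ J₂ t τ * qform E τ with hmdef
    have hppos : ∀ σ, 0 < segProb J₁ J₂ t σ := fun σ => isingProb_pos _ σ
    have hpsum : ∑ σ : Fin n → Bool, segProb J₁ J₂ t σ = 1 := sum_isingProb _
    have habs : ∀ σ, |D t σ| = segProb J₁ J₂ t σ * |qform E σ - m| := by
      intro σ
      rw [hDdef]
      rw [abs_mul, abs_of_pos (hppos σ)]
    have hCS : (∑ σ : Fin n → Bool, |D t σ|)^2
        ≤ ∑ σ : Fin n → Bool, segProb J₁ J₂ t σ * (qform E σ - m)^2 := by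
      have h := Finset.sum_mul_sq_le_sq_mul_sq Finset.univ
        (fun σ : Fin n → Bool => Real.sqrt (segProb J₁ J₂ t σ))
        (fun σ : Fin n → Bool => Real.sqrt (segProb J₁ J₂ t σ) * |qform E σ - m|)
      have e1 : ∀ σ : Fin n → Bool, Real.sqrt (segProb J₁ J₂ t σ) *
          (Real.sqrt (segProb J₁ J₂ t σ) * |qform E σ - m|) = |D t σ| := by
        intro σ
        rw [← mul_assoc, Real.mul_self_sqrt (hppos σ).le, habs σ]
      have e2 : ∀ σ : Fin n → Bool, (Real.sqrt (segProb J₁ J₂ t σ))^2 = segProb J₁ J₂ t σ :=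
        fun σ => Real.sq_sqrt (hppos σ).le
      have e3 : ∀ σ : Fin n → Bool, (Real.sqrt (segProb J₁ J₂ t σ) * |qform E σ - m|)^2
          = segProb J₁ J₂ t σ * (qform E σ - m)^2 := by
        intro σ
        rw [mul_pow, Real.sq_sqrt (hppos σ).le, sq_abs]
      rw [Finset.sum_congr rfl fun σ _ => e1 σ, Finset.sum_congr rfl fun σ _ => e2 σ,
        Finset.sum_congr rfl fun σ _ => e3 σ, hpsum, one_mul] at h
      exact h
    have hvarexp : ∑ σ : Fin n → Bool, segProb J₁ J₂ t σ * (qform E σ - m)^2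
        = isingVar (t • J₁ + (1-t) • J₂) dlt := by
      have expand : ∀ σ : Fin n → Bool, segProb J₁ J₂ t σ * (qform E σ - m)^2
          = segProb J₁ J₂ t σ * (qform E σ)^2
            - 2*m*(segProb J₁ J₂ t σ * qform E σ) + m^2 * segProb J₁ J₂ t σ := by
        intro σ; ring
      rw [Finset.sum_congr rfl fun σ _ => expand σ]
      rw [Finset.sum_add_distrib, Finset.sum_sub_distrib, ← Finset.mul_sum, ← Finset.mul_sum,
        ← hmdef, hpsum]
      have hm' : isingExp (t • J₁ + (1-t) • J₂) dlt = m := by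
        rw [isingExp, hmdef, hdlt]; rfl
      have hm2 : isingExp (t • J₁ + (1-t) • J₂) (fun σ => dlt σ ^ 2)
          = ∑ σ : Fin n → Bool, segProb J₁ J₂ t σ * (qform E σ)^2 := by
        rw [isingExp]; rfl
      rw [isingVar, hm', hm2]
      ring
    have hvb := hvarbound t ht
    have hDnn : 0 ≤ ∑ σ : Fin n → Bool, |D t σ| := Finset.sum_nonneg fun σ _ => abs_nonneg _
    have hRnn : 0 ≤ 2*ρ*Real.sqrt F := by positivity
    have hsq2 : (∑ σ : Fin n → Bool, |D t σ|)^2 ≤ (2*ρ*Real.sqrt F)^2 := by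
      have : (2*ρ*Real.sqrt F)^2 = 2*ρ*(2*ρ*F) := by
        rw [mul_pow, mul_pow, Real.sq_sqrt hF0]; ring
      rw [this]
      calc (∑ σ : Fin n → Bool, |D t σ|)^2
          ≤ ∑ σ : Fin n → Bool, segProb J₁ J₂ t σ * (qform E σ - m)^2 := hCS
        _ = isingVar (t • J₁ + (1-t) • J₂) dlt := hvarexp
        _ ≤ 2*ρ*(2*ρ*F) := hvb
    calc ∑ σ : Fin n → Bool, |D t σ|
        = Real.sqrt ((∑ σ : Fin n → Bool, |D t σ|)^2) := (Real.sqrt_sq hDnn).symm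
      _ ≤ Real.sqrt ((2*ρ*Real.sqrt F)^2) := Real.sqrt_le_sqrt hsq2
      _ = 2*ρ*Real.sqrt F := Real.sqrt_sq hRnn
  -- assemble
  have hmain : ∑ σ : Fin n → Bool, |isingProb J₁ σ - isingProb J₂ σ| ≤ 2*ρ*Real.sqrt F := by
    calc ∑ σ : Fin n → Bool, |isingProb J₁ σ - isingProb J₂ σ|
        = ∑ σ : Fin n → Bool, |∫ t in (0:ℝ)..1, D t σ| := by
          exact Finset.sum_congr rfl fun σ _ => by rw [hFTC σ]
      _ ≤ ∑ σ : Fin n → Bool, ∫ t in (0:ℝ)..1, |D t σ| :=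
          Finset.sum_le_sum fun σ _ =>
            intervalIntegral.abs_integral_le_integral_abs zero_le_one
      _ = ∫ t in (0:ℝ)..1, ∑ σ : Fin n → Bool, |D t σ| :=
          (intervalIntegral.integral_finset_sum
            (fun σ _ => ((hcontD σ).abs.intervalIntegrable 0 1))).symm
      _ ≤ ∫ _t in (0:ℝ)..1, (2*ρ*Real.sqrt F) := by
          refine intervalIntegral.integral_mono_on zero_le_one ?_ ?_ hsumD
          · exact (continuous_finset_sum _ fun σ _ => (hcontD σ).abs).intervalIntegrable 0 1
          · exact intervalIntegrable_const
      _ = 2*ρ*Real.sqrt F := by simp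
  linarith
end
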